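/- Coefficient matching forces the recursion on d_n: Let α ≠ 0 and let (d_n)_{n≥2} be nonzero reals. Define P_2(x) = x² − α d_2^{−1}, P_3(x) = x³ − 2α d_3^{−1} x, and for n ≥ 4, P_n(x) = x^n − α(n−1)d_n^{−1}x^{n−2} + α²((n−2)(n−3)/2)d_n^{−1}d_{n−1}^{−1}x^{n−4} + (lower terms). If x·P_n = P_{n+1} + ω_n P_{n−1} with ω_n = α(n·d_{n+1}^{−1} − (n−1)d_n^{−1}) for all n ≥ 3, then (n+1)d_{n+1} = 2n·d_n − (n−1)d_{n−1} for all n ≥ 3. -/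

import Mathlib

theorem stmt_18 (α : ℝ) (hα : α ≠ 0) (d : ℕ → ℝ)
    (hd : ∀ n : ℕ, 2 ≤ n → d n ≠ 0)
    (hcoeff : ∀ n : ℕ, 3 ≤ n →
      α ^ 2 * ((((n : ℝ) - 2) * ((n : ℝ) - 3)) / 2) * (d n)⁻¹ * (d (n - 1))⁻¹
        - α ^ 2 * ((((n : ℝ) - 1) * ((n : ℝ) - 2)) / 2) * (d (n + 1))⁻¹ * (d n)⁻¹
        - (α * (((n : ℝ) - 1) * (d n)⁻¹ - (n : ℝ) * (d (n + 1))⁻¹)) *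
            (α * ((n : ℝ) - 2) * (d (n - 1))⁻¹) = 0) :
    ∀ n : ℕ, 3 ≤ n →
      ((n : ℝ) + 1) * d (n + 1) = 2 * n * d n - ((n : ℝ) - 1) * d (n - 1) := by
  intro n hn
  have h := hcoeff n hn
  have h1 : d n ≠ 0 := hd n (by omega)
  have h2 : d (n + 1) ≠ 0 := hd (n + 1) (by omega)
  have h3 : d (n - 1) ≠ 0 := hd (n - 1) (by omega)
  have hn2 : ((n : ℝ) - 2) ≠ 0 := by
    have : (3 : ℝ) ≤ (n : ℝ) := by exact_mod_cast hn
    linarith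
  field_simp at h
  have key : (-2 * (d n) ^ 2 * d (n + 1) * d (n - 1) * α ^ 2 * ((n : ℝ) - 2)) *
      (((n : ℝ) + 1) * d (n + 1) - (2 * n * d n - ((n : ℝ) - 1) * d (n - 1))) = 0 := by
    linear_combination (2 * d n ^ 2 * d (n + 1) * d (n - 1)) * h
  have hne : (-2 * (d n) ^ 2 * d (n + 1) * d (n - 1) * α ^ 2 * ((n : ℝ) - 2)) ≠ 0 := by
    positivity
  have := (mul_eq_zero.mp key).resolve_left hne
  linarith
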